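/- arXiv:2301.13033 — 5 statements merged into one kernel-verified Lean document; each statement's English description precedes it below -/
import Mathlib

section
/- Let ν be a locally finite Borel measure on [0,∞) and let ρ > 0. If sup_{x≥1} ν([0,x])/x^ρ < ∞, then sup_{λ∈(0,1)} λ^ρ · ∫_{[0,∞)} e^{-λx} ν(dx) < ∞. -/
open MeasureTheory Filter Set

noncomputable section

/-- If `ν([0,x])/x^ρ` is bounded for `x ≥ 1`, then `λ^ρ ∫ e^{-λx} ν(dx)` is bounded
for `λ ∈ (0,1)`. -/
theorem laplace_bounded_of_polynomial_growth
    (ν : Measure ℝ) [IsLocallyFiniteMeasure ν]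
    (hsupp : ν (Set.Iio 0) = 0)
    (ρ : ℝ) (hρ : 0 < ρ)
    (hbdd : ∃ C : ℝ, ∀ x : ℝ, 1 ≤ x → (ν (Set.Icc 0 x)).toReal / x ^ ρ ≤ C) :
    ∃ C' : ℝ, ∀ l ∈ Set.Ioo (0:ℝ) 1,
      ENNReal.ofReal (l ^ ρ) *
          (∫⁻ x in Set.Ici (0:ℝ), ENNReal.ofReal (Real.exp (-l * x)) ∂ν)
        ≤ ENNReal.ofReal C' := by
  obtain ⟨C, hC⟩ := hbdd
  have hC0 : 0 ≤ C := by
    have := hC 1 le_rfl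
    have h1 : (0:ℝ) ≤ (ν (Set.Icc 0 1)).toReal / (1:ℝ) ^ ρ := by positivity
    linarith
  set k := ⌈ρ⌉₊ with hk
  -- summability of the master series
  have hr1 : ‖Real.exp (-1)‖ < 1 := by
    rw [Real.norm_eq_abs, abs_of_pos (Real.exp_pos _), Real.exp_lt_one_iff]
    norm_num
  have hsum0 : Summable (fun n : ℕ => ((n:ℝ)) ^ k * Real.exp (-1) ^ n) :=
    summable_pow_mul_geometric_of_norm_lt_one k hr1
  have hsum1 : Summable (fun n : ℕ => ((n:ℝ) + 1) ^ k * Real.exp (-1) ^ (n + 1)) := by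
    have := (summable_nat_add_iff (f := fun n : ℕ => ((n:ℝ)) ^ k * Real.exp (-1) ^ n) 1).2 hsum0
    simpa using this
  have hterm_nonneg : ∀ n : ℕ, 0 ≤ Real.exp (-(n:ℝ)) * ((n:ℝ) + 1) ^ ρ := by
    intro n; positivity
  have hbound : ∀ n : ℕ, Real.exp (-(n:ℝ)) * ((n:ℝ) + 1) ^ ρ
      ≤ Real.exp 1 * (((n:ℝ) + 1) ^ k * Real.exp (-1) ^ (n + 1)) := by
    intro n
    have hb1 : (1:ℝ) ≤ (n:ℝ) + 1 := by
      have := Nat.cast_nonneg (α := ℝ) n; linarith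
    have h1 : ((n:ℝ) + 1) ^ ρ ≤ ((n:ℝ) + 1) ^ (k:ℝ) :=
      Real.rpow_le_rpow_of_exponent_le hb1 (Nat.le_ceil ρ)
    have h1' : ((n:ℝ) + 1) ^ (k:ℝ) = ((n:ℝ) + 1) ^ k := Real.rpow_natCast _ _
    have h2 : Real.exp (-(n:ℝ)) = Real.exp (-1) ^ n := by
      rw [← Real.exp_nat_mul]; ring_nf
    have h3 : Real.exp 1 * Real.exp (-1) ^ (n + 1) = Real.exp (-1) ^ n := by
      rw [pow_succ, show Real.exp 1 * (Real.exp (-1) ^ n * Real.exp (-1))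
        = Real.exp 1 * Real.exp (-1) * Real.exp (-1) ^ n by ring, ← Real.exp_add]
      norm_num
    calc Real.exp (-(n:ℝ)) * ((n:ℝ) + 1) ^ ρ
        ≤ Real.exp (-(n:ℝ)) * ((n:ℝ) + 1) ^ k := by
          rw [← h1']
          exact mul_le_mul_of_nonneg_left h1 (Real.exp_pos _).le
      _ = Real.exp 1 * (((n:ℝ) + 1) ^ k * Real.exp (-1) ^ (n + 1)) := by
          rw [h2]; rw [show Real.exp 1 * (((n:ℝ) + 1) ^ k * Real.exp (-1) ^ (n + 1))
            = ((n:ℝ) + 1) ^ k * (Real.exp 1 * Real.exp (-1) ^ (n + 1)) by ring, h3]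
          ring
  have hsum2 : Summable (fun n : ℕ => Real.exp (-(n:ℝ)) * ((n:ℝ) + 1) ^ ρ) :=
    Summable.of_nonneg_of_le hterm_nonneg hbound (hsum1.mul_left _)
  set S := ∑' n : ℕ, Real.exp (-(n:ℝ)) * ((n:ℝ) + 1) ^ ρ with hS
  refine ⟨C * S, ?_⟩
  rintro l ⟨hl0, hl1⟩
  -- cover [0,∞) by the intervals [n/l, (n+1)/l)
  have hcover : Set.Ici (0:ℝ) ⊆ ⋃ n : ℕ, Set.Ico ((n:ℝ) / l) (((n:ℝ) + 1) / l) := by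
    intro x hx
    simp only [Set.mem_iUnion, Set.mem_Ico]
    refine ⟨⌊l * x⌋₊, ?_, ?_⟩
    · rw [div_le_iff₀ hl0]
      calc ((⌊l * x⌋₊ : ℝ)) ≤ l * x := Nat.floor_le (mul_nonneg hl0.le hx)
        _ = x * l := by ring
    · rw [lt_div_iff₀ hl0]
      calc x * l = l * x := by ring
        _ < (⌊l * x⌋₊ : ℝ) + 1 := Nat.lt_floor_add_one _
  -- bound the integral over each piece
  have hpiece : ∀ n : ℕ,
      (∫⁻ x in Set.Ico ((n:ℝ) / l) (((n:ℝ) + 1) / l), ENNReal.ofReal (Real.exp (-l * x)) ∂ν)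
        ≤ ENNReal.ofReal (Real.exp (-(n:ℝ))) * ENNReal.ofReal (C * (((n:ℝ) + 1) / l) ^ ρ) := by
    intro n
    have hx1 : (1:ℝ) ≤ ((n:ℝ) + 1) / l := by
      rw [le_div_iff₀ hl0]
      have := Nat.cast_nonneg (α := ℝ) n
      nlinarith
    have hstep1 : (∫⁻ x in Set.Ico ((n:ℝ) / l) (((n:ℝ) + 1) / l),
        ENNReal.ofReal (Real.exp (-l * x)) ∂ν)
        ≤ ENNReal.ofReal (Real.exp (-(n:ℝ))) * ν (Set.Ico ((n:ℝ) / l) (((n:ℝ) + 1) / l)) := by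
      rw [← setLIntegral_const]
      apply setLIntegral_mono measurable_const
      intro x hx
      apply ENNReal.ofReal_le_ofReal
      apply Real.exp_le_exp.2
      have hge : (n:ℝ) / l ≤ x := hx.1
      rw [div_le_iff₀ hl0] at hge
      nlinarith
    have hsub : Set.Ico ((n:ℝ) / l) (((n:ℝ) + 1) / l) ⊆ Set.Icc 0 (((n:ℝ) + 1) / l) := by
      intro x hx
      exact ⟨le_trans (by positivity) hx.1, hx.2.le⟩
    have hmeas : ν (Set.Icc 0 (((n:ℝ) + 1) / l)) ≤ ENNReal.ofReal (C * (((n:ℝ) + 1) / l) ^ ρ) := by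
      have hfin : ν (Set.Icc 0 (((n:ℝ) + 1) / l)) ≠ ⊤ :=
        (IsCompact.measure_lt_top isCompact_Icc).ne
      have hCx := hC _ hx1
      have hxpos : (0:ℝ) < (((n:ℝ) + 1) / l) ^ ρ := by positivity
      rw [div_le_iff₀ hxpos] at hCx
      calc ν (Set.Icc 0 (((n:ℝ) + 1) / l))
          = ENNReal.ofReal (ν (Set.Icc 0 (((n:ℝ) + 1) / l))).toReal :=
            (ENNReal.ofReal_toReal hfin).symm
        _ ≤ ENNReal.ofReal (C * (((n:ℝ) + 1) / l) ^ ρ) := ENNReal.ofReal_le_ofReal hCx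
    calc (∫⁻ x in Set.Ico ((n:ℝ) / l) (((n:ℝ) + 1) / l), ENNReal.ofReal (Real.exp (-l * x)) ∂ν)
        ≤ ENNReal.ofReal (Real.exp (-(n:ℝ))) * ν (Set.Ico ((n:ℝ) / l) (((n:ℝ) + 1) / l)) := hstep1
      _ ≤ ENNReal.ofReal (Real.exp (-(n:ℝ))) * ν (Set.Icc 0 (((n:ℝ) + 1) / l)) :=
          mul_le_mul_right (measure_mono hsub) _
      _ ≤ ENNReal.ofReal (Real.exp (-(n:ℝ))) * ENNReal.ofReal (C * (((n:ℝ) + 1) / l) ^ ρ) :=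
          mul_le_mul_right hmeas _
  -- the cancellation identity
  have hcancel : ∀ n : ℕ,
      l ^ ρ * (Real.exp (-(n:ℝ)) * (C * (((n:ℝ) + 1) / l) ^ ρ))
        = C * (Real.exp (-(n:ℝ)) * ((n:ℝ) + 1) ^ ρ) := by
    intro n
    have hn0 : (0:ℝ) ≤ (n:ℝ) + 1 / l := by positivity
    have h1 : l ^ ρ * (((n:ℝ) + 1) / l) ^ ρ = ((n:ℝ) + 1) ^ ρ := by
      rw [← Real.mul_rpow hl0.le (by positivity)]
      rw [mul_div_cancel₀ _ (ne_of_gt hl0)]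
    calc l ^ ρ * (Real.exp (-(n:ℝ)) * (C * (((n:ℝ) + 1) / l) ^ ρ))
        = C * Real.exp (-(n:ℝ)) * (l ^ ρ * (((n:ℝ) + 1) / l) ^ ρ) := by ring
      _ = C * (Real.exp (-(n:ℝ)) * ((n:ℝ) + 1) ^ ρ) := by rw [h1]; ring
  calc ENNReal.ofReal (l ^ ρ) * (∫⁻ x in Set.Ici (0:ℝ), ENNReal.ofReal (Real.exp (-l * x)) ∂ν)
      ≤ ENNReal.ofReal (l ^ ρ) *
        (∫⁻ x in ⋃ n : ℕ, Set.Ico ((n:ℝ) / l) (((n:ℝ) + 1) / l),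
          ENNReal.ofReal (Real.exp (-l * x)) ∂ν) :=
        mul_le_mul_right (lintegral_mono_set hcover) _
    _ ≤ ENNReal.ofReal (l ^ ρ) *
        ∑' n : ℕ, ∫⁻ x in Set.Ico ((n:ℝ) / l) (((n:ℝ) + 1) / l),
          ENNReal.ofReal (Real.exp (-l * x)) ∂ν :=
        mul_le_mul_right (lintegral_iUnion_le _ _) _
    _ ≤ ENNReal.ofReal (l ^ ρ) *
        ∑' n : ℕ, ENNReal.ofReal (Real.exp (-(n:ℝ))) * ENNReal.ofReal (C * (((n:ℝ) + 1) / l) ^ ρ) :=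
        mul_le_mul_right (ENNReal.tsum_le_tsum hpiece) _
    _ = ∑' n : ℕ, ENNReal.ofReal (l ^ ρ) *
        (ENNReal.ofReal (Real.exp (-(n:ℝ))) * ENNReal.ofReal (C * (((n:ℝ) + 1) / l) ^ ρ)) :=
        ENNReal.tsum_mul_left.symm
    _ = ∑' n : ℕ, ENNReal.ofReal (C * (Real.exp (-(n:ℝ)) * ((n:ℝ) + 1) ^ ρ)) := by
        congr 1
        funext n
        rw [← ENNReal.ofReal_mul (Real.exp_pos _).le,
          ← ENNReal.ofReal_mul (by positivity), hcancel n]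
    _ = ENNReal.ofReal (∑' n : ℕ, C * (Real.exp (-(n:ℝ)) * ((n:ℝ) + 1) ^ ρ)) :=
        (ENNReal.ofReal_tsum_of_nonneg (fun n => by positivity) (hsum2.mul_left C)).symm
    _ = ENNReal.ofReal (C * S) := by rw [hS, tsum_mul_left]

end
end

section
/- Let R be a nonnegative real random variable and let B ⊆ (0,∞) be a set having a limit point in (0,∞), i.e. there exists b ∈ (0,∞) belonging to the closure of B \ {b}. If E[exp(−√(π/2)·z·R)] = e^{−z} for every z ∈ B, then R = √(2/π) almost surely. -/
open MeasureTheory Filter Set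

noncomputable section

lemma aux_integrable {Ω : Type*} [MeasurableSpace Ω] (P : Measure Ω) [IsFiniteMeasure P]
    (Y : Ω → ℝ) (hY : Measurable Y) (hY1 : ∀ ω, Y ω ≤ 1) (z : ℝ) (hz : 0 ≤ z) :
    Integrable (fun ω => Real.exp (z * Y ω)) P := by
  have hm : Measurable fun ω => Real.exp (z * Y ω) := (hY.const_mul z).exp
  refine (integrable_const (Real.exp z)).mono' hm.aestronglyMeasurable
    (Filter.Eventually.of_forall fun ω => ?_)
  rw [Real.norm_eq_abs, abs_of_pos (Real.exp_pos _)]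
  exact Real.exp_le_exp.2 (by nlinarith [hY1 ω])

lemma aux_convex {Ω : Type*} [MeasurableSpace Ω] (P : Measure Ω) [IsFiniteMeasure P]
    (Y : Ω → ℝ) (hY : Measurable Y) (hY1 : ∀ ω, Y ω ≤ 1) (u v a b : ℝ)
    (hu : 0 ≤ u) (hv : 0 ≤ v) (ha : 0 ≤ a) (hb : 0 ≤ b) (hab : a + b = 1) :
    ∫ ω, Real.exp ((a * u + b * v) * Y ω) ∂P ≤
      a * ∫ ω, Real.exp (u * Y ω) ∂P + b * ∫ ω, Real.exp (v * Y ω) ∂P := by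
  have h1 := aux_integrable P Y hY hY1 u hu
  have h2 := aux_integrable P Y hY hY1 v hv
  have h0 : 0 ≤ a * u + b * v := add_nonneg (mul_nonneg ha hu) (mul_nonneg hb hv)
  have hpt : ∀ ω, Real.exp ((a * u + b * v) * Y ω) ≤
      a * Real.exp (u * Y ω) + b * Real.exp (v * Y ω) := by
    intro ω
    have hcv := convexOn_exp.2 (Set.mem_univ (u * Y ω)) (Set.mem_univ (v * Y ω)) ha hb hab
    have heq : (a * u + b * v) * Y ω = a * (u * Y ω) + b * (v * Y ω) := by ring
    rw [heq]
    simpa [smul_eq_mul] using hcv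
  calc ∫ ω, Real.exp ((a * u + b * v) * Y ω) ∂P
      ≤ ∫ ω, (a * Real.exp (u * Y ω) + b * Real.exp (v * Y ω)) ∂P :=
        integral_mono (aux_integrable P Y hY hY1 _ h0) ((h1.const_mul a).add (h2.const_mul b)) hpt
    _ = a * ∫ ω, Real.exp (u * Y ω) ∂P + b * ∫ ω, Real.exp (v * Y ω) ∂P := by
        rw [integral_add (h1.const_mul a) (h2.const_mul b), integral_const_mul,
          integral_const_mul]

lemma aux_three_ordered (s : Set ℝ) {x y z : ℝ} (hx : x ∈ s) (hy : y ∈ s) (hz : z ∈ s)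
    (hxy : x ≠ y) (hyz : y ≠ z) (hxz : x ≠ z) :
    ∃ a b c : ℝ, a ∈ s ∧ b ∈ s ∧ c ∈ s ∧ a < b ∧ b < c := by
  rcases hxy.lt_or_gt with h1 | h1 <;> rcases hyz.lt_or_gt with h2 | h2 <;>
    rcases hxz.lt_or_gt with h3 | h3
  · exact ⟨x, y, z, hx, hy, hz, h1, h2⟩
  · linarith
  · exact ⟨x, z, y, hx, hz, hy, h3, h2⟩
  · exact ⟨z, x, y, hz, hx, hy, h3, h1⟩
  · exact ⟨y, x, z, hy, hx, hz, h1, h3⟩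
  · exact ⟨y, z, x, hy, hz, hx, h2, h3⟩
  · linarith
  · exact ⟨z, y, x, hz, hy, hx, h2, h1⟩

/-- If the Laplace transform identity `E[exp(−√(π/2)·z·R)] = e^{−z}` holds for all `z` in a set
`B ⊆ (0,∞)` having a limit point in `(0,∞)`, then `R = √(2/π)` almost surely. -/
theorem laplace_identity_on_set_with_limit_point
    {Ω : Type*} [MeasurableSpace Ω] (P : Measure Ω) [IsProbabilityMeasure P]
    (R : Ω → ℝ) (hR : Measurable R) (hRnonneg : ∀ ω, 0 ≤ R ω)
    (B : Set ℝ) (hB : B ⊆ Set.Ioi 0)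
    (hlim : ∃ b ∈ Set.Ioi (0:ℝ), b ∈ closure (B \ {b}))
    (hlaplace : ∀ z ∈ B,
      ∫ ω, Real.exp (-(Real.sqrt (Real.pi / 2)) * z * R ω) ∂P = Real.exp (-z)) :
    ∀ᵐ ω ∂P, R ω = Real.sqrt (2 / Real.pi) := by
  set c : ℝ := Real.sqrt (Real.pi / 2) with hc_def
  have hπ : 0 < Real.pi := Real.pi_pos
  have hc : 0 < c := Real.sqrt_pos.2 (by linarith)
  set Y : Ω → ℝ := fun ω => 1 - c * R ω with hY_def
  have hYmeas : Measurable Y := measurable_const.sub (hR.const_mul c)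
  have hY1 : ∀ ω, Y ω ≤ 1 := fun ω => by
    have := hRnonneg ω
    simp only [hY_def]
    nlinarith
  -- G z = 1 for z ∈ B
  have hG : ∀ z ∈ B, ∫ ω, Real.exp (z * Y ω) ∂P = 1 := by
    intro z hz
    have h1 : ∀ ω, Real.exp (z * Y ω) = Real.exp z * Real.exp (-c * z * R ω) := by
      intro ω
      rw [← Real.exp_add]
      congr 1
      simp only [hY_def]
      ring
    simp_rw [h1]
    rw [integral_const_mul _ _]
    have h2 : ∀ ω, Real.exp (-c * z * R ω) = Real.exp (-(Real.sqrt (Real.pi / 2)) * z * R ω) := by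
      intro ω; rw [hc_def]
    simp_rw [h2]
    rw [hlaplace z hz, ← Real.exp_add]
    simp
  -- three distinct points of B
  obtain ⟨b, hb0, hbcl⟩ := hlim
  have hget : ∀ ε : ℝ, 0 < ε → ∃ w ∈ B \ {b}, dist b w < ε := fun ε hε =>
    Metric.mem_closure_iff.1 hbcl ε hε
  obtain ⟨w1, hw1B, hw1d⟩ := hget 1 one_pos
  have hw1b : w1 ≠ b := hw1B.2
  have hd1 : 0 < dist b w1 := dist_pos.2 (Ne.symm hw1b)
  obtain ⟨w2, hw2B, hw2d⟩ := hget _ hd1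
  have hd2 : 0 < dist b w2 := dist_pos.2 (Ne.symm hw2B.2)
  obtain ⟨w3, hw3B, hw3d⟩ := hget _ hd2
  have h12 : w1 ≠ w2 := fun h => by rw [h] at hw2d; exact lt_irrefl _ hw2d
  have h23 : w2 ≠ w3 := fun h => by rw [h] at hw3d; exact lt_irrefl _ hw3d
  have h13 : w1 ≠ w3 := fun h => by rw [← h] at hw3d; linarith
  obtain ⟨z1, z2, z3, hz1B, hz2B, hz3B, h12', h23'⟩ :=
    aux_three_ordered B hw1B.1 hw2B.1 hw3B.1 h12 h23 h13
  have hz1 : 0 < z1 := hB hz1B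
  have hz2 : 0 < z2 := hB hz2B
  have hz3 : 0 < z3 := hB hz3B
  set m : ℝ := (z1 + z3) / 2 with hm_def
  have hm0 : 0 < m := by simp only [hm_def]; linarith
  have hmz1 : z1 < m := by simp only [hm_def]; linarith
  have hmz3 : m < z3 := by simp only [hm_def]; linarith
  -- G m ≤ 1
  have hGm_le : ∫ ω, Real.exp (m * Y ω) ∂P ≤ 1 := by
    have h := aux_convex P Y hYmeas hY1 z1 z3 (1/2) (1/2) hz1.le hz3.le
      (by norm_num) (by norm_num) (by norm_num)
    have heq : (1/2 : ℝ) * z1 + (1/2) * z3 = m := by simp only [hm_def]; ring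
    rw [heq, hG z1 hz1B, hG z3 hz3B] at h
    linarith
  -- G m ≥ 1
  have hGm_ge : 1 ≤ ∫ ω, Real.exp (m * Y ω) ∂P := by
    rcases lt_trichotomy z2 m with hlt | heq | hgt
    · -- z2 between z1 and m
      set a : ℝ := (m - z2) / (m - z1) with ha_def
      set bb : ℝ := (z2 - z1) / (m - z1) with hb_def
      have hden : 0 < m - z1 := by linarith
      have ha0 : 0 ≤ a := div_nonneg (by linarith) hden.le
      have hb0' : 0 < bb := div_pos (by linarith) hden
      have hab : a + bb = 1 := by
        rw [ha_def, hb_def, ← add_div, div_eq_one_iff_eq hden.ne']; ring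
      have hcomb : a * z1 + bb * m = z2 := by
        rw [ha_def, hb_def]; field_simp; ring
      have h := aux_convex P Y hYmeas hY1 z1 m a bb hz1.le hm0.le ha0 hb0'.le hab
      rw [hcomb, hG z2 hz2B, hG z1 hz1B] at h
      nlinarith
    · rw [← heq]; exact (hG z2 hz2B).ge
    · -- z2 between m and z3
      set a : ℝ := (z3 - z2) / (z3 - m) with ha_def
      set bb : ℝ := (z2 - m) / (z3 - m) with hb_def
      have hden : 0 < z3 - m := by linarith
      have ha0 : 0 < a := div_pos (by linarith) hden
      have hb0' : 0 ≤ bb := div_nonneg (by linarith) hden.le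
      have hab : a + bb = 1 := by
        rw [ha_def, hb_def, ← add_div, div_eq_one_iff_eq hden.ne']; ring
      have hcomb : a * m + bb * z3 = z2 := by
        rw [ha_def, hb_def]; field_simp; ring
      have h := aux_convex P Y hYmeas hY1 m z3 a bb hm0.le hz3.le ha0.le hb0' hab
      rw [hcomb, hG z2 hz2B, hG z3 hz3B] at h
      nlinarith
  have hGm : ∫ ω, Real.exp (m * Y ω) ∂P = 1 := le_antisymm hGm_le hGm_ge
  -- the nonnegative function with zero integral
  set f : Ω → ℝ :=
    fun ω => Real.exp (z1 * Y ω) + Real.exp (z3 * Y ω) - 2 * Real.exp (m * Y ω) with hf_def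
  have hI1 := aux_integrable P Y hYmeas hY1 z1 hz1.le
  have hI3 := aux_integrable P Y hYmeas hY1 z3 hz3.le
  have hIm := aux_integrable P Y hYmeas hY1 m hm0.le
  have hfint : Integrable f P := (hI1.add hI3).sub (hIm.const_mul 2)
  have hfkey : ∀ ω, Real.exp (m * Y ω) = Real.exp (z1 * Y ω / 2) * Real.exp (z3 * Y ω / 2) := by
    intro ω
    rw [← Real.exp_add]
    congr 1
    simp only [hm_def]
    ring
  have hsq1 : ∀ ω, Real.exp (z1 * Y ω) = Real.exp (z1 * Y ω / 2) ^ 2 := by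
    intro ω; rw [sq, ← Real.exp_add]; congr 1; ring
  have hsq3 : ∀ ω, Real.exp (z3 * Y ω) = Real.exp (z3 * Y ω / 2) ^ 2 := by
    intro ω; rw [sq, ← Real.exp_add]; congr 1; ring
  have hfnonneg : ∀ ω, 0 ≤ f ω := by
    intro ω
    have h := sq_nonneg (Real.exp (z1 * Y ω / 2) - Real.exp (z3 * Y ω / 2))
    simp only [hf_def]
    rw [hsq1 ω, hsq3 ω, hfkey ω]
    nlinarith
  have hI13 : Integrable (fun ω => Real.exp (z1 * Y ω) + Real.exp (z3 * Y ω)) P :=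
    hI1.add hI3
  have hI2m : Integrable (fun ω => 2 * Real.exp (m * Y ω)) P := hIm.const_mul 2
  have hfzero : ∫ ω, f ω ∂P = 0 := by
    simp only [hf_def]
    rw [integral_sub hI13 hI2m, integral_add hI1 hI3,
      integral_const_mul, hG z1 hz1B, hG z3 hz3B, hGm]
    ring
  have hae : ∀ᵐ ω ∂P, f ω = 0 :=
    (integral_eq_zero_iff_of_nonneg hfnonneg hfint).1 hfzero
  -- conclude
  have hsqrt : Real.sqrt (2 / Real.pi) = c⁻¹ := by
    rw [hc_def, ← Real.sqrt_inv, inv_div]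
  filter_upwards [hae] with ω hω
  have h0 : Real.exp (z1 * Y ω / 2) = Real.exp (z3 * Y ω / 2) := by
    have h := sq_nonneg (Real.exp (z1 * Y ω / 2) - Real.exp (z3 * Y ω / 2))
    have hf' : f ω = (Real.exp (z1 * Y ω / 2) - Real.exp (z3 * Y ω / 2)) ^ 2 := by
      simp only [hf_def]
      rw [hsq1 ω, hsq3 ω, hfkey ω]; ring
    have : (Real.exp (z1 * Y ω / 2) - Real.exp (z3 * Y ω / 2)) ^ 2 = 0 := by
      rw [← hf']; exact hω
    have := pow_eq_zero_iff (n := 2) (by norm_num) |>.1 this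
    linarith
  have hY0 : Y ω = 0 := by
    have := Real.exp_eq_exp.1 h0
    have h13 : z1 ≠ z3 := by linarith
    have : (z1 - z3) * Y ω = 0 := by linear_combination 2 * this
    rcases mul_eq_zero.1 this with h | h
    · exfalso; apply h13; linarith
    · exact h
  have : c * R ω = 1 := by
    simp only [hY_def] at hY0; linarith
  rw [hsqrt]
  field_simp
  linarith

end
end

section
/- Let θ̂ be a random locally finite Borel measure on [0,∞) such that almost surely ∫_{[0,∞)} e^{-λx²} θ̂(dx) < ∞ for every λ > 0, and such that the family { s^{-3/2} · ∫_{[0,∞)} x e^{-√2·x} e^{-x²/(2s)} θ̂(dx) : s ≥ 1 } of real random variables is tight. Then s^{-5/2} · ∫_{[0,∞)} x² e^{-√2·x} e^{-x²/(4s)} θ̂(dx) → 0 in probability as s → ∞. -/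
open MeasureTheory Filter Set

noncomputable section

/-- Convergence in probability of a family of real random variables to a constant,
along a filter on the index set. -/
def ConvInProb {Ω ι : Type*} [MeasurableSpace Ω] (P : Measure Ω) (l : Filter ι)
    (X : ι → Ω → ℝ) (c : ℝ) : Prop :=
  ∀ ε > (0:ℝ), Tendsto (fun i => P {ω | ε < |X i ω - c|}) l (nhds 0)

/-- Tightness of a family of real random variables. -/
def TightFamily {Ω ι : Type*} [MeasurableSpace Ω] (P : Measure Ω)
    (X : ι → Ω → ℝ) : Prop :=
  ∀ ε > (0:ℝ), ∃ M : ℝ, ∀ i, P {ω | M < |X i ω|} ≤ ENNReal.ofReal ε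

lemma aux1 (u : ℝ) : 0 ≤ u → u * Real.exp (-u) ≤ 1 := by
  intro hu
  have h := Real.add_one_le_exp u
  have he := Real.exp_pos u
  rw [Real.exp_neg]
  calc u * (Real.exp u)⁻¹ ≤ Real.exp u * (Real.exp u)⁻¹ := by
        apply mul_le_mul_of_nonneg_right (by linarith) (inv_nonneg.2 he.le)
    _ = 1 := mul_inv_cancel₀ he.ne'

lemma aux2' (v : ℝ) (hv : 0 ≤ v) : v * Real.exp (-(v^2)) ≤ 1 := by
  have h := Real.add_one_le_exp (v^2)
  have he := Real.exp_pos (v^2)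
  rw [Real.exp_neg]
  calc v * (Real.exp (v^2))⁻¹ ≤ Real.exp (v^2) * (Real.exp (v^2))⁻¹ := by
        apply mul_le_mul_of_nonneg_right (by nlinarith) (inv_nonneg.2 he.le)
    _ = 1 := mul_inv_cancel₀ he.ne'

lemma aux2 (x c : ℝ) (hx : 0 ≤ x) (hc : 0 < c) :
    x * Real.exp (-(x^2/c)) ≤ Real.sqrt c := by
  have hr : 0 < Real.sqrt c := Real.sqrt_pos.2 hc
  have hr2 : Real.sqrt c ^ 2 = c := Real.sq_sqrt hc.le
  set v := x / Real.sqrt c with hv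
  have hveq : x^2/c = v^2 := by rw [hv, div_pow, hr2]
  have hx' : x = Real.sqrt c * v := by rw [hv]; field_simp
  calc x * Real.exp (-(x^2/c)) = Real.sqrt c * (v * Real.exp (-(v^2))) := by
        rw [hveq, hx']; ring
    _ ≤ Real.sqrt c * 1 :=
        mul_le_mul_of_nonneg_left (aux2' v (div_nonneg hx hr.le)) hr.le
    _ = Real.sqrt c := mul_one _

lemma aux3 (x c : ℝ) (hc : 0 < c) :
    x^2 * Real.exp (-(x^2/c)) ≤ c := by
  have h := aux1 (x^2/c) (by positivity)
  calc x^2 * Real.exp (-(x^2/c)) = c * ((x^2/c) * Real.exp (-(x^2/c))) := by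
        field_simp
    _ ≤ c * 1 := mul_le_mul_of_nonneg_left h hc.le
    _ = c := mul_one _

lemma integrableOn_of_exp_bound (μ : Measure ℝ) (f : ℝ → ℝ) (hf : Continuous f)
    (l c : ℝ) (hc : 0 ≤ c)
    (hfin : ∫⁻ x in Ici (0:ℝ), ENNReal.ofReal (Real.exp (-l * x^2)) ∂μ < ⊤)
    (hb : ∀ x ∈ Ici (0:ℝ), |f x| ≤ c * Real.exp (-l * x^2)) :
    IntegrableOn f (Ici 0) μ := by
  refine ⟨hf.aestronglyMeasurable, ?_⟩
  rw [hasFiniteIntegral_iff_norm]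
  calc ∫⁻ x in Ici (0:ℝ), ENNReal.ofReal ‖f x‖ ∂μ
      ≤ ∫⁻ x in Ici (0:ℝ), ENNReal.ofReal c * ENNReal.ofReal (Real.exp (-l * x^2)) ∂μ := by
        apply lintegral_mono_ae
        filter_upwards [ae_restrict_of_forall_mem measurableSet_Ici hb] with x hx
        rw [← ENNReal.ofReal_mul hc]
        exact ENNReal.ofReal_le_ofReal (by rwa [Real.norm_eq_abs])
    _ = ENNReal.ofReal c * ∫⁻ x in Ici (0:ℝ), ENNReal.ofReal (Real.exp (-l * x^2)) ∂μ :=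
        lintegral_const_mul' _ _ ENNReal.ofReal_ne_top
    _ < ⊤ := ENNReal.mul_lt_top ENNReal.ofReal_lt_top hfin

/-- Tightness of `s^{-3/2} ∫ x e^{-√2 x} e^{-x²/(2s)} θ̂(dx)` implies that
`s^{-5/2} ∫ x² e^{-√2 x} e^{-x²/(4s)} θ̂(dx) → 0` in probability as `s → ∞`. -/
theorem I1_term_vanishes
    {Ω : Type*} [MeasurableSpace Ω] (P : Measure Ω) [IsProbabilityMeasure P]
    (θ : Ω → Measure ℝ) (hmeas : Measurable θ)
    (hloc : ∀ ω, IsLocallyFiniteMeasure (θ ω))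
    (hsupp : ∀ ω, θ ω (Set.Iio 0) = 0)
    (hfin : ∀ᵐ ω ∂P, ∀ l : ℝ, 0 < l →
      (∫⁻ x in Set.Ici (0:ℝ), ENNReal.ofReal (Real.exp (-l * x ^ 2)) ∂(θ ω)) < ⊤)
    (htight : TightFamily P (fun s : Set.Ici (1:ℝ) => fun ω =>
      (s : ℝ) ^ (-(3:ℝ)/2) * ∫ x in Set.Ici (0:ℝ),
        x * Real.exp (-(Real.sqrt 2) * x) * Real.exp (-x ^ 2 / (2 * (s:ℝ))) ∂(θ ω))) :
    ConvInProb P atTop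
      (fun s ω => s ^ (-(5:ℝ)/2) * ∫ x in Set.Ici (0:ℝ),
        x ^ 2 * Real.exp (-(Real.sqrt 2) * x) * Real.exp (-x ^ 2 / (4 * s)) ∂(θ ω)) 0 := by
  intro ε hε
  rw [ENNReal.tendsto_nhds_zero]
  intro δ hδ
  obtain ⟨r, hr0, hrδ⟩ : ∃ r : ℝ, 0 < r ∧ ENNReal.ofReal r ≤ δ := by
    by_cases h : (1:ENNReal) ≤ δ
    · exact ⟨1, one_pos, by simpa using h⟩
    · push_neg at h
      have hne : δ ≠ ⊤ := h.ne_top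
      exact ⟨δ.toReal, ENNReal.toReal_pos hδ.ne' hne, by rw [ENNReal.ofReal_toReal hne]⟩
  obtain ⟨M, hM⟩ := htight r hr0
  set K : ℝ := 24 * (max M 0 + 1) / ε with hKdef
  have hK0 : 0 < K := by
    have : (0:ℝ) < max M 0 + 1 := by positivity
    positivity
  rw [eventually_atTop]
  refine ⟨max 1 (K^2), fun s hs => ?_⟩
  have hs1 : (1:ℝ) ≤ s := le_trans (le_max_left _ _) hs
  have hsK : K^2 ≤ s := le_trans (le_max_right _ _) hs
  have hs0 : (0:ℝ) < s := lt_of_lt_of_le one_pos hs1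
  have h4s : (1:ℝ) ≤ 4 * s := by linarith
  have hA : P {ω | ¬ ∀ l : ℝ, 0 < l →
      (∫⁻ x in Set.Ici (0:ℝ), ENNReal.ofReal (Real.exp (-l * x ^ 2)) ∂(θ ω)) < ⊤} = 0 :=
    ae_iff.mp hfin
  have hMi : P {ω | M < |(4*s) ^ (-(3:ℝ)/2) * ∫ x in Set.Ici (0:ℝ),
      x * Real.exp (-(Real.sqrt 2) * x) * Real.exp (-x ^ 2 / (2 * (4*s))) ∂(θ ω)|}
      ≤ ENNReal.ofReal r := hM ⟨4*s, h4s⟩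
  have hsqs : 0 < Real.sqrt s := Real.sqrt_pos.2 hs0
  -- the subset claim
  have hsub : {ω | ε < |s ^ (-(5:ℝ)/2) * (∫ x in Set.Ici (0:ℝ),
        x ^ 2 * Real.exp (-(Real.sqrt 2) * x) * Real.exp (-x ^ 2 / (4 * s)) ∂(θ ω)) - 0|}
      ⊆ {ω | M < |(4*s) ^ (-(3:ℝ)/2) * ∫ x in Set.Ici (0:ℝ),
      x * Real.exp (-(Real.sqrt 2) * x) * Real.exp (-x ^ 2 / (2 * (4*s))) ∂(θ ω)|}
      ∪ {ω | ¬ ∀ l : ℝ, 0 < l →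
      (∫⁻ x in Set.Ici (0:ℝ), ENNReal.ofReal (Real.exp (-l * x ^ 2)) ∂(θ ω)) < ⊤} := by
    intro ω hω
    by_cases hgood : ∀ l : ℝ, 0 < l →
        (∫⁻ x in Set.Ici (0:ℝ), ENNReal.ofReal (Real.exp (-l * x ^ 2)) ∂(θ ω)) < ⊤
    swap
    · exact Or.inr hgood
    left
    simp only [mem_setOf_eq, sub_zero] at hω ⊢
    set f : ℝ → ℝ := fun x => x ^ 2 * Real.exp (-(Real.sqrt 2) * x) * Real.exp (-x ^ 2 / (4 * s)) with hfdef
    set g : ℝ → ℝ := fun x => x * Real.exp (-(Real.sqrt 2) * x) * Real.exp (-x ^ 2 / (2 * (4*s))) with hgdef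
    have hgnn : ∀ x ∈ Ici (0:ℝ), 0 ≤ g x := fun x hx =>
      mul_nonneg (mul_nonneg hx (Real.exp_pos _).le) (Real.exp_pos _).le
    have hfnn : ∀ x ∈ Ici (0:ℝ), 0 ≤ f x := fun x hx =>
      mul_nonneg (mul_nonneg (by positivity) (Real.exp_pos _).le) (Real.exp_pos _).le
    -- integrability of g
    have hgint : IntegrableOn g (Ici 0) (θ ω) := by
      apply integrableOn_of_exp_bound _ _ (by fun_prop) (1/(16*s)) (Real.sqrt (16*s))
        (Real.sqrt_nonneg _) (hgood _ (by positivity))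
      intro x hx
      have hx0 : (0:ℝ) ≤ x := hx
      rw [abs_of_nonneg (hgnn x hx)]
      have e1 : Real.exp (-x^2/(2*(4*s))) =
          Real.exp (-(x^2/(16*s))) * Real.exp (-(x^2/(16*s))) := by
        rw [← Real.exp_add]; congr 1; field_simp; ring
      calc g x = (x * Real.exp (-(x^2/(16*s)))) *
            (Real.exp (-(Real.sqrt 2)*x) * Real.exp (-(x^2/(16*s)))) := by
            rw [hgdef]; simp only []; rw [e1]; ring
        _ ≤ Real.sqrt (16*s) * (1 * Real.exp (-(x^2/(16*s)))) := by
            apply mul_le_mul (aux2 x (16*s) hx0 (by positivity))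
            · apply mul_le_mul_of_nonneg_right _ (Real.exp_pos _).le
              exact Real.exp_le_one_iff.2 (by nlinarith [Real.sqrt_nonneg 2])
            · positivity
            · exact Real.sqrt_nonneg _
        _ = Real.sqrt (16*s) * Real.exp (-(1/(16*s)) * x^2) := by
            rw [one_mul]; congr 1; ring
    -- integrability of f
    have hfint : IntegrableOn f (Ici 0) (θ ω) := by
      apply integrableOn_of_exp_bound _ _ (by fun_prop) (1/(8*s)) (8*s)
        (by positivity) (hgood _ (by positivity))
      intro x hx
      have hx0 : (0:ℝ) ≤ x := hx
      rw [abs_of_nonneg (hfnn x hx)]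
      have e1 : Real.exp (-x^2/(4*s)) =
          Real.exp (-(x^2/(8*s))) * Real.exp (-(x^2/(8*s))) := by
        rw [← Real.exp_add]; congr 1; field_simp; ring
      calc f x = (x^2 * Real.exp (-(x^2/(8*s)))) *
            (Real.exp (-(Real.sqrt 2)*x) * Real.exp (-(x^2/(8*s)))) := by
            rw [hfdef]; simp only []; rw [e1]; ring
        _ ≤ (8*s) * (1 * Real.exp (-(x^2/(8*s)))) := by
            apply mul_le_mul (aux3 x (8*s) (by positivity))
            · apply mul_le_mul_of_nonneg_right _ (Real.exp_pos _).le
              exact Real.exp_le_one_iff.2 (by nlinarith [Real.sqrt_nonneg 2])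
            · positivity
            · positivity
        _ = (8*s) * Real.exp (-(1/(8*s)) * x^2) := by
            rw [one_mul]; congr 1; ring
    -- pointwise bound f ≤ 3√s g
    have hpt : ∀ x ∈ Ici (0:ℝ), f x ≤ (3 * Real.sqrt s) * g x := by
      intro x hx
      have hx0 : (0:ℝ) ≤ x := hx
      have e1 : Real.exp (-x^2/(4*s)) =
          Real.exp (-(x^2/(8*s))) * Real.exp (-x^2/(2*(4*s))) := by
        rw [← Real.exp_add]; congr 1; field_simp; ring
      have hb : x * Real.exp (-(x^2/(8*s))) ≤ 3 * Real.sqrt s := by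
        have h1 := aux2 x (8*s) hx0 (by positivity)
        have h8 : Real.sqrt (8*s) = Real.sqrt 8 * Real.sqrt s := Real.sqrt_mul (by norm_num) s
        have h3 : Real.sqrt 8 ≤ 3 := by
          rw [show (3:ℝ) = Real.sqrt 9 by
            rw [show (9:ℝ) = 3^2 by norm_num, Real.sqrt_sq (by norm_num : (0:ℝ) ≤ 3)]]
          exact Real.sqrt_le_sqrt (by norm_num)
        calc x * Real.exp (-(x^2/(8*s))) ≤ Real.sqrt 8 * Real.sqrt s := h8 ▸ h1
          _ ≤ 3 * Real.sqrt s := mul_le_mul_of_nonneg_right h3 (Real.sqrt_nonneg _)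
      calc f x = (x * Real.exp (-(x^2/(8*s)))) * g x := by
            rw [hfdef, hgdef]; simp only []; rw [e1]; ring
        _ ≤ (3 * Real.sqrt s) * g x := mul_le_mul_of_nonneg_right hb (hgnn x hx)
    have hIle : (∫ x in Ici (0:ℝ), f x ∂(θ ω)) ≤ (3 * Real.sqrt s) * ∫ x in Ici (0:ℝ), g x ∂(θ ω) := by
      rw [← integral_const_mul]
      exact setIntegral_mono_on hfint (hgint.const_mul _) measurableSet_Ici hpt
    have hgI : 0 ≤ ∫ x in Ici (0:ℝ), g x ∂(θ ω) := setIntegral_nonneg measurableSet_Ici hgnn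
    have hfI : 0 ≤ ∫ x in Ici (0:ℝ), f x ∂(θ ω) := setIntegral_nonneg measurableSet_Ici hfnn
    set If := ∫ x in Ici (0:ℝ), f x ∂(θ ω)
    set Ig := ∫ x in Ici (0:ℝ), g x ∂(θ ω)
    set Y := (4*s) ^ (-(3:ℝ)/2) * Ig with hYdef
    have hYnn : 0 ≤ Y := mul_nonneg (Real.rpow_nonneg (by linarith) _) hgI
    have hεX : ε < s ^ (-(5:ℝ)/2) * If := by
      rwa [abs_of_nonneg (mul_nonneg (Real.rpow_nonneg hs0.le _) hfI)] at hω
    have h1 : Ig = (4*s) ^ ((3:ℝ)/2) * Y := by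
      rw [hYdef, ← mul_assoc, ← Real.rpow_add (by linarith : (0:ℝ) < 4*s)]
      norm_num
    have h4 : ((4:ℝ)*s) ^ ((3:ℝ)/2) = 8 * s ^ ((3:ℝ)/2) := by
      rw [Real.mul_rpow (by norm_num) hs0.le]
      congr 1
      rw [show (4:ℝ) = (2:ℝ)^(2:ℕ) by norm_num, ← Real.rpow_natCast 2 2,
        ← Real.rpow_mul (by norm_num : (0:ℝ) ≤ 2)]
      rw [show ((2:ℕ):ℝ) * ((3:ℝ)/2) = ((3:ℕ):ℝ) by push_cast; ring, Real.rpow_natCast]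
      norm_num
    have hconst : s ^ (-(5:ℝ)/2) * (3 * Real.sqrt s) * (4*s) ^ ((3:ℝ)/2) = 24 / Real.sqrt s := by
      rw [h4, Real.sqrt_eq_rpow]
      calc s ^ (-(5:ℝ)/2) * (3 * s ^ ((1:ℝ)/2)) * (8 * s ^ ((3:ℝ)/2))
          = 24 * (s ^ (-(5:ℝ)/2) * s ^ ((1:ℝ)/2) * s ^ ((3:ℝ)/2)) := by ring
        _ = 24 * s ^ (-((1:ℝ)/2)) := by
            rw [← Real.rpow_add hs0, ← Real.rpow_add hs0]; norm_num
        _ = 24 / s ^ ((1:ℝ)/2) := by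
            rw [Real.rpow_neg hs0.le]; ring
    have key : ε < (24 / Real.sqrt s) * Y := by
      have h2 : s ^ (-(5:ℝ)/2) * If ≤ (24 / Real.sqrt s) * Y := by
        calc s ^ (-(5:ℝ)/2) * If
            ≤ s ^ (-(5:ℝ)/2) * ((3 * Real.sqrt s) * Ig) :=
              mul_le_mul_of_nonneg_left hIle (Real.rpow_nonneg hs0.le _)
          _ = (s ^ (-(5:ℝ)/2) * (3 * Real.sqrt s) * (4*s) ^ ((3:ℝ)/2)) * Y := by
              rw [h1]; ring
          _ = (24 / Real.sqrt s) * Y := by rw [hconst]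
      linarith
    have hY' : ε * Real.sqrt s < 24 * Y := by
      have := key
      rw [div_mul_eq_mul_div, lt_div_iff₀ hsqs] at this
      linarith
    have hKs : K ≤ Real.sqrt s := by
      have := Real.sqrt_le_sqrt hsK
      rwa [Real.sqrt_sq hK0.le] at this
    have hεK : ε * K = 24 * (max M 0 + 1) := by
      rw [hKdef]; field_simp
    have hMY : M < Y := by
      have h5 : ε * K ≤ ε * Real.sqrt s := mul_le_mul_of_nonneg_left hKs hε.le
      have h6 := le_max_left M 0
      nlinarith
    rw [abs_of_nonneg hYnn]
    exact hMY
  calc P {ω | ε < |s ^ (-(5:ℝ)/2) * (∫ x in Set.Ici (0:ℝ),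
        x ^ 2 * Real.exp (-(Real.sqrt 2) * x) * Real.exp (-x ^ 2 / (4 * s)) ∂(θ ω)) - 0|}
      ≤ P ({ω | M < |(4*s) ^ (-(3:ℝ)/2) * ∫ x in Set.Ici (0:ℝ),
      x * Real.exp (-(Real.sqrt 2) * x) * Real.exp (-x ^ 2 / (2 * (4*s))) ∂(θ ω)|}
      ∪ {ω | ¬ ∀ l : ℝ, 0 < l →
      (∫⁻ x in Set.Ici (0:ℝ), ENNReal.ofReal (Real.exp (-l * x ^ 2)) ∂(θ ω)) < ⊤}) :=
        measure_mono hsub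
    _ ≤ _ + _ := measure_union_le _ _
    _ ≤ ENNReal.ofReal r + 0 := add_le_add hMi (le_of_eq hA)
    _ ≤ δ := by rw [add_zero]; exact hrδ


end
end

section
/- Let θ̂ be a random locally finite Borel measure on [0,∞) such that almost surely ∫_{[0,∞)} e^{-λx²} θ̂(dx) < ∞ for every λ > 0, and such that the family { s^{-3/2} · ∫_{[0,∞)} x e^{-√2·x} e^{-x²/(2s)} θ̂(dx) : s ≥ 1 } of real random variables is tight. Then s^{-3/2} · ∫_{[0,∞)} x e^{-√2·x} e^{-x²/(2s)} · ( e^{x²/(2 s^{3/2})} − 1 ) θ̂(dx) → 0 in probability as s → ∞ (the integrals being taken for s > 1, where the integrand is nonnegative and the integral is almost surely finite). -/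
open MeasureTheory Filter Set

section AuxLemmas

lemma xexp_le_one {x : ℝ} (hx : 0 ≤ x) : x * Real.exp (-(Real.sqrt 2) * x) ≤ 1 := by
  have h1 : 1 ≤ Real.sqrt 2 := by
    nlinarith [Real.sq_sqrt (show (0:ℝ) ≤ 2 by norm_num), Real.sqrt_nonneg 2]
  rw [show -(Real.sqrt 2) * x = -(Real.sqrt 2 * x) by ring, Real.exp_neg,
    ← div_eq_mul_inv, div_le_one (Real.exp_pos _)]
  nlinarith [Real.add_one_le_exp (Real.sqrt 2 * x)]

lemma integrand_nonneg {s x : ℝ} (hs0 : 0 < s) (hx : 0 ≤ x) :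
    0 ≤ x * Real.exp (-(Real.sqrt 2) * x) * Real.exp (-x ^ 2 / (2 * s)) *
      (Real.exp (x ^ 2 / (2 * s ^ ((3:ℝ)/2))) - 1) := by
  have h32 : (0:ℝ) < s ^ ((3:ℝ)/2) := Real.rpow_pos_of_pos hs0 _
  have harg : 0 ≤ x ^ 2 / (2 * s ^ ((3:ℝ)/2)) := by positivity
  have := Real.one_le_exp harg
  have h0 : 0 ≤ x * Real.exp (-(Real.sqrt 2) * x) * Real.exp (-x ^ 2 / (2 * s)) := by positivity
  nlinarith

lemma integrable_aux (μ : Measure ℝ) {l : ℝ} (hl : 0 < l)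
    (hfin : (∫⁻ x in Set.Ici (0:ℝ), ENNReal.ofReal (Real.exp (-l * x ^ 2)) ∂μ) < ⊤)
    {φ : ℝ → ℝ} (hc : Continuous φ)
    (hbd : ∀ x ∈ Set.Ici (0:ℝ), |φ x| ≤ Real.exp (-l * x ^ 2)) :
    IntegrableOn φ (Set.Ici (0:ℝ)) μ := by
  refine ⟨hc.aestronglyMeasurable, ?_⟩
  rw [hasFiniteIntegral_iff_norm]
  refine lt_of_le_of_lt (lintegral_mono_ae ?_) hfin
  filter_upwards [ae_restrict_mem measurableSet_Ici] with x hx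
  exact ENNReal.ofReal_le_ofReal (by simpa [Real.norm_eq_abs] using hbd x hx)


lemma rpow_facts {s : ℝ} (hs : 4 ≤ s) :
    s ^ ((3:ℝ)/2) = s * s ^ ((1:ℝ)/2) ∧ (2:ℝ) ≤ s ^ ((1:ℝ)/2) ∧
    s ^ ((1:ℝ)/4) = s ^ ((5:ℝ)/4) / s ∧ s ^ (-(1:ℝ)/4) = s ^ ((5:ℝ)/4) / s ^ ((3:ℝ)/2) := by
  have hs0 : (0:ℝ) < s := by linarith
  refine ⟨?_, ?_, ?_, ?_⟩
  · rw [show (3:ℝ)/2 = 1 + 1/2 by norm_num, Real.rpow_add hs0, Real.rpow_one]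
  · have h4 : ((4:ℝ)) ^ ((1:ℝ)/2) = 2 := by
      rw [show (4:ℝ) = 2 ^ (2:ℕ) by norm_num, ← Real.rpow_natCast 2 2,
        ← Real.rpow_mul (by norm_num)]
      norm_num
    calc (2:ℝ) = (4:ℝ) ^ ((1:ℝ)/2) := h4.symm
    _ ≤ s ^ ((1:ℝ)/2) := Real.rpow_le_rpow (by norm_num) hs (by norm_num)
  · rw [show (1:ℝ)/4 = 5/4 - 1 by norm_num, Real.rpow_sub hs0, Real.rpow_one]
  · rw [show -(1:ℝ)/4 = 5/4 - 3/2 by norm_num, Real.rpow_sub hs0]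

lemma ptwise {s x : ℝ} (hs : 4 ≤ s) (hx : 0 ≤ x) :
    x * Real.exp (-(Real.sqrt 2) * x) * Real.exp (-x ^ 2 / (2 * s)) *
        (Real.exp (x ^ 2 / (2 * s ^ ((3:ℝ)/2))) - 1)
      ≤ (Real.exp (s ^ (-(1:ℝ)/4) / 2) - 1) *
          (x * Real.exp (-(Real.sqrt 2) * x) * Real.exp (-x ^ 2 / (2 * s)))
        + Real.exp (-(s ^ ((1:ℝ)/4)) / 8) *
          (x * Real.exp (-(Real.sqrt 2) * x) * Real.exp (-x ^ 2 / (2 * (4 * s)))) := by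
  have hs0 : (0:ℝ) < s := by linarith
  obtain ⟨h32, hhalf, h14, hm14⟩ := rpow_facts hs
  have hxe : 0 ≤ x * Real.exp (-(Real.sqrt 2) * x) :=
    mul_nonneg hx (Real.exp_pos _).le
  rcases le_or_gt (x ^ 2) (s ^ ((5:ℝ)/4)) with h | h
  · -- small x: first term dominates
    have h1 : Real.exp (x ^ 2 / (2 * s ^ ((3:ℝ)/2))) ≤ Real.exp (s ^ (-(1:ℝ)/4) / 2) := by
      apply Real.exp_le_exp.2
      rw [hm14]
      calc x ^ 2 / (2 * s ^ ((3:ℝ)/2)) ≤ s ^ ((5:ℝ)/4) / (2 * s ^ ((3:ℝ)/2)) := by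
            gcongr
        _ = s ^ ((5:ℝ)/4) / s ^ ((3:ℝ)/2) / 2 := by ring
    have h2 : 0 ≤ Real.exp (-(s ^ ((1:ℝ)/4)) / 8) *
        (x * Real.exp (-(Real.sqrt 2) * x) * Real.exp (-x ^ 2 / (2 * (4 * s)))) := by
      exact mul_nonneg (Real.exp_pos _).le (mul_nonneg hxe (Real.exp_pos _).le)
    have h3 : 0 ≤ x * Real.exp (-(Real.sqrt 2) * x) * Real.exp (-x ^ 2 / (2 * s)) := by
      have := Real.exp_pos (-x ^ 2 / (2 * s))
      nlinarith
    nlinarith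
  · -- large x: second term dominates
    have hexp : -x ^ 2 / (2 * s) + x ^ 2 / (2 * s ^ ((3:ℝ)/2))
        ≤ -(s ^ ((1:ℝ)/4)) / 8 + -x ^ 2 / (2 * (4 * s)) := by
      rw [h32, h14]
      have t1 : x ^ 2 / (2 * (s * s ^ ((1:ℝ)/2))) ≤ x ^ 2 / (4 * s) := by
        apply div_le_div_of_nonneg_left (sq_nonneg x) (by nlinarith) (by nlinarith)
      have t2 : s ^ ((5:ℝ)/4) / (8 * s) ≤ x ^ 2 / (8 * s) := by gcongr
      have r1 : x ^ 2 / (4 * s) = 2 * (x ^ 2 / (8 * s)) := by ring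
      have r2 : -x ^ 2 / (2 * s) = -(4 * (x ^ 2 / (8 * s))) := by ring
      have r3 : -(s ^ ((5:ℝ)/4) / s) / 8 = -(s ^ ((5:ℝ)/4) / (8 * s)) := by ring
      have r4 : -x ^ 2 / (2 * (4 * s)) = -(x ^ 2 / (8 * s)) := by ring
      linarith
    have e1 : Real.exp (-x ^ 2 / (2 * s)) * (Real.exp (x ^ 2 / (2 * s ^ ((3:ℝ)/2))) - 1)
        ≤ Real.exp (-(s ^ ((1:ℝ)/4)) / 8) * Real.exp (-x ^ 2 / (2 * (4 * s))) := by
      calc Real.exp (-x ^ 2 / (2 * s)) * (Real.exp (x ^ 2 / (2 * s ^ ((3:ℝ)/2))) - 1)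
          ≤ Real.exp (-x ^ 2 / (2 * s)) * Real.exp (x ^ 2 / (2 * s ^ ((3:ℝ)/2))) := by
            nlinarith [Real.exp_pos (-x ^ 2 / (2 * s)),
              Real.exp_pos (x ^ 2 / (2 * s ^ ((3:ℝ)/2)))]
        _ = Real.exp (-x ^ 2 / (2 * s) + x ^ 2 / (2 * s ^ ((3:ℝ)/2))) := (Real.exp_add _ _).symm
        _ ≤ Real.exp (-(s ^ ((1:ℝ)/4)) / 8 + -x ^ 2 / (2 * (4 * s))) := Real.exp_le_exp.2 hexp
        _ = _ := Real.exp_add _ _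
    have h4 : 0 ≤ (Real.exp (s ^ (-(1:ℝ)/4) / 2) - 1) *
        (x * Real.exp (-(Real.sqrt 2) * x) * Real.exp (-x ^ 2 / (2 * s))) := by
      have harg : 0 ≤ s ^ (-(1:ℝ)/4) / 2 := by
        have : (0:ℝ) ≤ s ^ (-(1:ℝ)/4) := Real.rpow_nonneg hs0.le _
        linarith
      have h1 := Real.one_le_exp harg
      exact mul_nonneg (by linarith) (mul_nonneg hxe (Real.exp_pos _).le)
    have h5 := mul_le_mul_of_nonneg_left e1 hxe
    nlinarith


lemma gbound {s x : ℝ} (hs0 : 0 < s) (hx : 0 ≤ x) :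
    |x * Real.exp (-(Real.sqrt 2) * x) * Real.exp (-x ^ 2 / (2 * s))|
      ≤ Real.exp (-(1/(2*s)) * x ^ 2) := by
  have h0 : 0 ≤ x * Real.exp (-(Real.sqrt 2) * x) * Real.exp (-x ^ 2 / (2 * s)) :=
    mul_nonneg (mul_nonneg hx (Real.exp_pos _).le) (Real.exp_pos _).le
  rw [abs_of_nonneg h0, show -(1/(2*s)) * x ^ 2 = -x ^ 2 / (2 * s) by ring]
  calc x * Real.exp (-(Real.sqrt 2) * x) * Real.exp (-x ^ 2 / (2 * s))
      ≤ 1 * Real.exp (-x ^ 2 / (2 * s)) :=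
        mul_le_mul_of_nonneg_right (xexp_le_one hx) (Real.exp_pos _).le
    _ = _ := one_mul _

lemma fbound {s x : ℝ} (hs : 4 ≤ s) (hx : 0 ≤ x) :
    |x * Real.exp (-(Real.sqrt 2) * x) * Real.exp (-x ^ 2 / (2 * s)) *
        (Real.exp (x ^ 2 / (2 * s ^ ((3:ℝ)/2))) - 1)|
      ≤ Real.exp (-(1/(4*s)) * x ^ 2) := by
  have hs0 : (0:ℝ) < s := by linarith
  obtain ⟨h32, hhalf, -, -⟩ := rpow_facts hs
  rw [abs_of_nonneg (integrand_nonneg hs0 hx)]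
  have key : Real.exp (-x ^ 2 / (2 * s)) * (Real.exp (x ^ 2 / (2 * s ^ ((3:ℝ)/2))) - 1)
      ≤ Real.exp (-(1/(4*s)) * x ^ 2) := by
    calc Real.exp (-x ^ 2 / (2 * s)) * (Real.exp (x ^ 2 / (2 * s ^ ((3:ℝ)/2))) - 1)
        ≤ Real.exp (-x ^ 2 / (2 * s)) * Real.exp (x ^ 2 / (2 * s ^ ((3:ℝ)/2))) := by
          nlinarith [Real.exp_pos (-x ^ 2 / (2 * s)),
            Real.exp_pos (x ^ 2 / (2 * s ^ ((3:ℝ)/2)))]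
      _ = Real.exp (-x ^ 2 / (2 * s) + x ^ 2 / (2 * s ^ ((3:ℝ)/2))) := (Real.exp_add _ _).symm
      _ ≤ Real.exp (-(1/(4*s)) * x ^ 2) := by
          apply Real.exp_le_exp.2
          rw [h32]
          have t1 : x ^ 2 / (2 * (s * s ^ ((1:ℝ)/2))) ≤ x ^ 2 / (4 * s) :=
            div_le_div_of_nonneg_left (sq_nonneg x) (by nlinarith) (by nlinarith)
          have r1 : -(1/(4*s)) * x ^ 2 = -x ^ 2 / (2 * s) + x ^ 2 / (4 * s) := by ring
          linarith
  have hxe : 0 ≤ x * Real.exp (-(Real.sqrt 2) * x) :=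
    mul_nonneg hx (Real.exp_pos _).le
  have hnn : 0 ≤ Real.exp (-x ^ 2 / (2 * s)) * (Real.exp (x ^ 2 / (2 * s ^ ((3:ℝ)/2))) - 1) := by
    have harg : 0 ≤ x ^ 2 / (2 * s ^ ((3:ℝ)/2)) := by
      have := Real.rpow_pos_of_pos hs0 ((3:ℝ)/2); positivity
    nlinarith [Real.one_le_exp harg, Real.exp_pos (-x ^ 2 / (2 * s))]
  calc x * Real.exp (-(Real.sqrt 2) * x) * Real.exp (-x ^ 2 / (2 * s)) *
        (Real.exp (x ^ 2 / (2 * s ^ ((3:ℝ)/2))) - 1)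
      = (x * Real.exp (-(Real.sqrt 2) * x)) *
        (Real.exp (-x ^ 2 / (2 * s)) * (Real.exp (x ^ 2 / (2 * s ^ ((3:ℝ)/2))) - 1)) := by ring
    _ ≤ 1 * Real.exp (-(1/(4*s)) * x ^ 2) := mul_le_mul (xexp_le_one hx) key hnn zero_le_one
    _ = _ := one_mul _

lemma integrable_g (μ : Measure ℝ)
    (hfin : ∀ l : ℝ, 0 < l →
      (∫⁻ x in Set.Ici (0:ℝ), ENNReal.ofReal (Real.exp (-l * x ^ 2)) ∂μ) < ⊤)
    {s : ℝ} (hs0 : 0 < s) :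
    IntegrableOn (fun x => x * Real.exp (-(Real.sqrt 2) * x) *
      Real.exp (-x ^ 2 / (2 * s))) (Set.Ici (0:ℝ)) μ := by
  refine integrable_aux μ (show (0:ℝ) < 1/(2*s) by positivity) (hfin _ (by positivity)) ?_
    (fun x hx => gbound hs0 hx)
  continuity

lemma key_bound (μ : Measure ℝ)
    (hfin : ∀ l : ℝ, 0 < l →
      (∫⁻ x in Set.Ici (0:ℝ), ENNReal.ofReal (Real.exp (-l * x ^ 2)) ∂μ) < ⊤)
    {s : ℝ} (hs : 4 ≤ s) :
    (∫ x in Set.Ici (0:ℝ), x * Real.exp (-(Real.sqrt 2) * x) * Real.exp (-x ^ 2 / (2 * s)) *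
        (Real.exp (x ^ 2 / (2 * s ^ ((3:ℝ)/2))) - 1) ∂μ)
      ≤ (Real.exp (s ^ (-(1:ℝ)/4) / 2) - 1) *
          (∫ x in Set.Ici (0:ℝ), x * Real.exp (-(Real.sqrt 2) * x) *
            Real.exp (-x ^ 2 / (2 * s)) ∂μ)
        + Real.exp (-(s ^ ((1:ℝ)/4)) / 8) *
          (∫ x in Set.Ici (0:ℝ), x * Real.exp (-(Real.sqrt 2) * x) *
            Real.exp (-x ^ 2 / (2 * (4 * s))) ∂μ) := by
  have hs0 : (0:ℝ) < s := by linarith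
  have hif : IntegrableOn (fun x => x * Real.exp (-(Real.sqrt 2) * x) *
      Real.exp (-x ^ 2 / (2 * s)) * (Real.exp (x ^ 2 / (2 * s ^ ((3:ℝ)/2))) - 1))
      (Set.Ici (0:ℝ)) μ := by
    refine integrable_aux μ (show (0:ℝ) < 1/(4*s) by positivity) (hfin _ (by positivity)) ?_
      (fun x hx => fbound hs hx)
    continuity
  have hig := integrable_g μ hfin hs0
  have hih := integrable_g μ hfin (show (0:ℝ) < 4*s by linarith)
  calc (∫ x in Set.Ici (0:ℝ), x * Real.exp (-(Real.sqrt 2) * x) * Real.exp (-x ^ 2 / (2 * s)) *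
        (Real.exp (x ^ 2 / (2 * s ^ ((3:ℝ)/2))) - 1) ∂μ)
      ≤ ∫ x in Set.Ici (0:ℝ),
          ((Real.exp (s ^ (-(1:ℝ)/4) / 2) - 1) *
            (x * Real.exp (-(Real.sqrt 2) * x) * Real.exp (-x ^ 2 / (2 * s)))
          + Real.exp (-(s ^ ((1:ℝ)/4)) / 8) *
            (x * Real.exp (-(Real.sqrt 2) * x) * Real.exp (-x ^ 2 / (2 * (4 * s))))) ∂μ := by
        refine setIntegral_mono_on hif ?_ measurableSet_Ici (fun x hx => ptwise hs hx)
        exact (hig.const_mul _).add (hih.const_mul _)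
    _ = _ := by
        rw [integral_add (hig.const_mul _) (hih.const_mul _),
          MeasureTheory.integral_const_mul, MeasureTheory.integral_const_mul]


end AuxLemmas

noncomputable section

/-- Tightness of `s^{-3/2} ∫ x e^{-√2 x} e^{-x²/(2s)} θ̂(dx)` implies that
`s^{-3/2} ∫ x e^{-√2 x} e^{-x²/(2s)} (e^{x²/(2 s^{3/2})} − 1) θ̂(dx) → 0`
in probability as `s → ∞`. -/
theorem I4_term_vanishes
    {Ω : Type*} [MeasurableSpace Ω] (P : Measure Ω) [IsProbabilityMeasure P]
    (θ : Ω → Measure ℝ) (hmeas : Measurable θ)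
    (hloc : ∀ ω, IsLocallyFiniteMeasure (θ ω))
    (hsupp : ∀ ω, θ ω (Set.Iio 0) = 0)
    (hfin : ∀ᵐ ω ∂P, ∀ l : ℝ, 0 < l →
      (∫⁻ x in Set.Ici (0:ℝ), ENNReal.ofReal (Real.exp (-l * x ^ 2)) ∂(θ ω)) < ⊤)
    (htight : TightFamily P (fun s : Set.Ici (1:ℝ) => fun ω =>
      (s : ℝ) ^ (-(3:ℝ)/2) * ∫ x in Set.Ici (0:ℝ),
        x * Real.exp (-(Real.sqrt 2) * x) * Real.exp (-x ^ 2 / (2 * (s:ℝ))) ∂(θ ω))) :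
    ConvInProb P atTop
      (fun s ω => s ^ (-(3:ℝ)/2) * ∫ x in Set.Ici (0:ℝ),
        x * Real.exp (-(Real.sqrt 2) * x) * Real.exp (-x ^ 2 / (2 * s)) *
          (Real.exp (x ^ 2 / (2 * s ^ ((3:ℝ)/2))) - 1) ∂(θ ω)) 0 := by
  intro ε hε
  rw [ENNReal.tendsto_nhds_zero]
  intro η hη
  obtain ⟨r, hr0, hrη⟩ : ∃ r : ℝ, 0 < r ∧ ENNReal.ofReal r ≤ η := by
    rcases eq_or_ne η ⊤ with h | h
    · exact ⟨1, by norm_num, h ▸ le_top⟩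
    · exact ⟨η.toReal, ENNReal.toReal_pos hη.ne' h, (ENNReal.ofReal_toReal h).le⟩
  obtain ⟨M, hM⟩ := htight (r/2) (by positivity)
  set M₀ : ℝ := max M 0 with hM₀def
  have hδ0 : Tendsto (fun s:ℝ => Real.exp (s ^ (-(1:ℝ)/4) / 2) - 1) atTop (nhds 0) := by
    have e1 : Tendsto (fun s:ℝ => s ^ (-(1:ℝ)/4)) atTop (nhds 0) := by
      simpa [show -(1:ℝ)/4 = -(1/4:ℝ) by norm_num] using
        tendsto_rpow_neg_atTop (show (0:ℝ) < 1/4 by norm_num)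
    have e2 : Tendsto (fun s:ℝ => Real.exp (s ^ (-(1:ℝ)/4) / 2) - 1) atTop
        (nhds (Real.exp (0/2) - 1)) :=
      (Real.continuous_exp.continuousAt.tendsto.comp (e1.div_const 2)).sub_const 1
    simpa using e2
  have hK0 : Tendsto (fun s:ℝ => (4:ℝ) ^ ((3:ℝ)/2) * Real.exp (-(s ^ ((1:ℝ)/4)) / 8))
      atTop (nhds 0) := by
    have e3 : Tendsto (fun s:ℝ => s ^ ((1:ℝ)/4)) atTop atTop := tendsto_rpow_atTop (by norm_num)
    have e4 : Tendsto (fun s:ℝ => -(s ^ ((1:ℝ)/4)) / 8) atTop atBot :=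
      (tendsto_neg_atTop_atBot.comp e3).atBot_div_const (by norm_num)
    have e5 : Tendsto (fun s:ℝ => Real.exp (-(s ^ ((1:ℝ)/4)) / 8)) atTop (nhds 0) :=
      Real.tendsto_exp_atBot.comp e4
    simpa using e5.const_mul ((4:ℝ) ^ ((3:ℝ)/2))
  have hlim : Tendsto (fun s:ℝ => ((Real.exp (s ^ (-(1:ℝ)/4) / 2) - 1)
      + (4:ℝ) ^ ((3:ℝ)/2) * Real.exp (-(s ^ ((1:ℝ)/4)) / 8)) * M₀) atTop (nhds 0) := by
    simpa using (hδ0.add hK0).mul_const M₀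
  filter_upwards [(hlim.eventually_lt_const hε).and (eventually_ge_atTop 4)] with s hss
  obtain ⟨hsε, hs4⟩ := hss
  have hs0 : (0:ℝ) < s := by linarith
  have hs1 : s ∈ Set.Ici (1:ℝ) := by simp only [Set.mem_Ici]; linarith
  have hs1' : 4 * s ∈ Set.Ici (1:ℝ) := by simp only [Set.mem_Ici]; linarith
  set F := (fun s : Set.Ici (1:ℝ) => fun ω =>
      (s : ℝ) ^ (-(3:ℝ)/2) * ∫ x in Set.Ici (0:ℝ),
        x * Real.exp (-(Real.sqrt 2) * x) * Real.exp (-x ^ 2 / (2 * (s:ℝ))) ∂(θ ω)) with hF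
  have hN : P {ω | ¬ (∀ l : ℝ, 0 < l →
      (∫⁻ x in Set.Ici (0:ℝ), ENNReal.ofReal (Real.exp (-l * x ^ 2)) ∂(θ ω)) < ⊤)} = 0 :=
    ae_iff.mp hfin
  have hincl : {ω | ε < |(s ^ (-(3:ℝ)/2) * ∫ x in Set.Ici (0:ℝ),
        x * Real.exp (-(Real.sqrt 2) * x) * Real.exp (-x ^ 2 / (2 * s)) *
          (Real.exp (x ^ 2 / (2 * s ^ ((3:ℝ)/2))) - 1) ∂(θ ω)) - 0|} ⊆
      ({ω | M₀ < |F ⟨s, hs1⟩ ω|} ∪ {ω | M₀ < |F ⟨4 * s, hs1'⟩ ω|}) ∪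
      {ω | ¬ (∀ l : ℝ, 0 < l →
        (∫⁻ x in Set.Ici (0:ℝ), ENNReal.ofReal (Real.exp (-l * x ^ 2)) ∂(θ ω)) < ⊤)} := by
    intro ω hω
    simp only [Set.mem_setOf_eq, Set.mem_union] at hω ⊢
    by_contra hcon
    push_neg at hcon
    obtain ⟨⟨hA, hB⟩, hQ⟩ := hcon
    have hYa : F ⟨s, hs1⟩ ω ≤ M₀ := le_trans (le_abs_self _) hA
    have hYb : F ⟨4 * s, hs1'⟩ ω ≤ M₀ := le_trans (le_abs_self _) hB
    set I := ∫ x in Set.Ici (0:ℝ),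
        x * Real.exp (-(Real.sqrt 2) * x) * Real.exp (-x ^ 2 / (2 * s)) *
          (Real.exp (x ^ 2 / (2 * s ^ ((3:ℝ)/2))) - 1) ∂(θ ω) with hI
    have hXnn : 0 ≤ s ^ (-(3:ℝ)/2) * I := by
      apply mul_nonneg (Real.rpow_nonneg hs0.le _)
      exact setIntegral_nonneg measurableSet_Ici (fun x hx => integrand_nonneg hs0 hx)
    have hkb := key_bound (θ ω) hQ hs4
    have hrnn : (0:ℝ) ≤ s ^ (-(3:ℝ)/2) := Real.rpow_nonneg hs0.le _
    have hmul4 : ((4:ℝ) * s) ^ (-(3:ℝ)/2) = (4:ℝ) ^ (-(3:ℝ)/2) * s ^ (-(3:ℝ)/2) :=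
      Real.mul_rpow (by norm_num) hs0.le
    have h441 : (4:ℝ) ^ ((3:ℝ)/2) * (4:ℝ) ^ (-(3:ℝ)/2) = 1 := by
      rw [← Real.rpow_add (by norm_num)]; norm_num
    set Ig := ∫ x in Set.Ici (0:ℝ),
        x * Real.exp (-(Real.sqrt 2) * x) * Real.exp (-x ^ 2 / (2 * s)) ∂(θ ω) with hIg
    set Ih := ∫ x in Set.Ici (0:ℝ),
        x * Real.exp (-(Real.sqrt 2) * x) * Real.exp (-x ^ 2 / (2 * (4 * s))) ∂(θ ω) with hIh
    have hX1 : s ^ (-(3:ℝ)/2) * I ≤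
        (Real.exp (s ^ (-(1:ℝ)/4) / 2) - 1) * (s ^ (-(3:ℝ)/2) * Ig)
        + Real.exp (-(s ^ ((1:ℝ)/4)) / 8) * (s ^ (-(3:ℝ)/2) * Ih) := by
      have := mul_le_mul_of_nonneg_left hkb hrnn
      nlinarith [this]
    have hYa' : F ⟨s, hs1⟩ ω = s ^ (-(3:ℝ)/2) * Ig := rfl
    have hYb' : F ⟨4 * s, hs1'⟩ ω = ((4:ℝ) * s) ^ (-(3:ℝ)/2) * Ih := rfl
    have hX2 : Real.exp (-(s ^ ((1:ℝ)/4)) / 8) * (s ^ (-(3:ℝ)/2) * Ih) =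
        ((4:ℝ) ^ ((3:ℝ)/2) * Real.exp (-(s ^ ((1:ℝ)/4)) / 8)) *
          (((4:ℝ) * s) ^ (-(3:ℝ)/2) * Ih) := by
      rw [hmul4]
      linear_combination (-(Real.exp (-(s ^ ((1:ℝ)/4)) / 8) * (s ^ (-(3:ℝ)/2)) * Ih)) * h441
    have hδnn : 0 ≤ Real.exp (s ^ (-(1:ℝ)/4) / 2) - 1 := by
      have harg : 0 ≤ s ^ (-(1:ℝ)/4) / 2 := by
        have := Real.rpow_nonneg hs0.le (-(1:ℝ)/4); linarith
      linarith [Real.one_le_exp harg]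
    have hKnn : 0 ≤ (4:ℝ) ^ ((3:ℝ)/2) * Real.exp (-(s ^ ((1:ℝ)/4)) / 8) := by positivity
    have hM₀nn : 0 ≤ M₀ := le_max_right _ _
    have hfinal : s ^ (-(3:ℝ)/2) * I < ε := by
      calc s ^ (-(3:ℝ)/2) * I
          ≤ (Real.exp (s ^ (-(1:ℝ)/4) / 2) - 1) * (F ⟨s, hs1⟩ ω)
            + ((4:ℝ) ^ ((3:ℝ)/2) * Real.exp (-(s ^ ((1:ℝ)/4)) / 8)) * (F ⟨4 * s, hs1'⟩ ω) := by
            rw [hYa', hYb', ← hX2]; exact hX1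
        _ ≤ (Real.exp (s ^ (-(1:ℝ)/4) / 2) - 1) * M₀
            + ((4:ℝ) ^ ((3:ℝ)/2) * Real.exp (-(s ^ ((1:ℝ)/4)) / 8)) * M₀ := by
            gcongr
        _ = ((Real.exp (s ^ (-(1:ℝ)/4) / 2) - 1)
            + (4:ℝ) ^ ((3:ℝ)/2) * Real.exp (-(s ^ ((1:ℝ)/4)) / 8)) * M₀ := by ring
        _ < ε := hsε
    rw [sub_zero, abs_of_nonneg hXnn] at hω
    exact absurd hω (not_lt.mpr hfinal.le)
  calc P {ω | ε < |(s ^ (-(3:ℝ)/2) * ∫ x in Set.Ici (0:ℝ),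
        x * Real.exp (-(Real.sqrt 2) * x) * Real.exp (-x ^ 2 / (2 * s)) *
          (Real.exp (x ^ 2 / (2 * s ^ ((3:ℝ)/2))) - 1) ∂(θ ω)) - 0|}
      ≤ P (({ω | M₀ < |F ⟨s, hs1⟩ ω|} ∪ {ω | M₀ < |F ⟨4 * s, hs1'⟩ ω|}) ∪
        {ω | ¬ (∀ l : ℝ, 0 < l →
          (∫⁻ x in Set.Ici (0:ℝ), ENNReal.ofReal (Real.exp (-l * x ^ 2)) ∂(θ ω)) < ⊤)}) :=
        measure_mono hincl
    _ ≤ P ({ω | M₀ < |F ⟨s, hs1⟩ ω|} ∪ {ω | M₀ < |F ⟨4 * s, hs1'⟩ ω|}) + P {ω | ¬ (∀ l : ℝ, 0 < l →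
          (∫⁻ x in Set.Ici (0:ℝ), ENNReal.ofReal (Real.exp (-l * x ^ 2)) ∂(θ ω)) < ⊤)} :=
        measure_union_le _ _
    _ ≤ (P {ω | M₀ < |F ⟨s, hs1⟩ ω|} + P {ω | M₀ < |F ⟨4 * s, hs1'⟩ ω|}) + 0 := by
        rw [hN]
        exact add_le_add_left (measure_union_le _ _) 0
    _ ≤ (P {ω | M < |F ⟨s, hs1⟩ ω|} + P {ω | M < |F ⟨4 * s, hs1'⟩ ω|}) + 0 := by
        gcongr <;>
          exact le_max_left M 0
    _ ≤ (ENNReal.ofReal (r/2) + ENNReal.ofReal (r/2)) + 0 :=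
        add_le_add_left (add_le_add (hM _) (hM _)) 0
    _ = ENNReal.ofReal r := by
        rw [add_zero, ← ENNReal.ofReal_add (by positivity) (by positivity)]; norm_num
    _ ≤ η := hrη

end
end

section
/- For every β ∈ (0,1], the Cesàro averages of cos(x^β) vanish: lim_{t→∞} (1/t) · ∫_1^t cos(x^β) dx = 0. -/
open MeasureTheory Filter Set

noncomputable section

/-- For every `β ∈ (0,1]`, the Cesàro averages of `cos(x^β)` vanish:
`(1/t) ∫_{[1,t]} cos(x^β) dx → 0` as `t → ∞`. -/
theorem cesaro_average_cos_rpow_vanishes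
    (β : ℝ) (hβ : β ∈ Set.Ioc (0:ℝ) 1) :
    Tendsto (fun t : ℝ => (1 / t) * ∫ x in Set.Icc (1:ℝ) t, Real.cos (x ^ β))
      atTop (nhds 0) := by
  obtain ⟨hβ0, hβ1⟩ := hβ
  set c : ℝ := (1 - β) / β with hc
  have hc0 : 0 ≤ c := div_nonneg (by linarith) hβ0.le
  set F : ℝ → ℝ := fun x => x ^ (1 - β) * Real.sin (x ^ β) / β with hFdef
  set f : ℝ → ℝ := fun x => Real.cos (x ^ β) + c * (x ^ (-β) * Real.sin (x ^ β))
    with hfdef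
  -- derivative of F
  have hder : ∀ x : ℝ, 0 < x → HasDerivAt F (f x) x := by
    intro x hx0
    have h1 : HasDerivAt (fun y : ℝ => y ^ (1 - β)) ((1 - β) * x ^ (1 - β - 1)) x :=
      Real.hasDerivAt_rpow_const (Or.inl hx0.ne')
    have h2 : HasDerivAt (fun y : ℝ => y ^ β) (β * x ^ (β - 1)) x :=
      Real.hasDerivAt_rpow_const (Or.inl hx0.ne')
    have h3 : HasDerivAt (fun y : ℝ => Real.sin (y ^ β))
        (Real.cos (x ^ β) * (β * x ^ (β - 1))) x := h2.sin
    have h4 := (h1.mul h3).div_const β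
    refine h4.congr_deriv ?_
    symm
    have hxx : x ^ (1 - β) * x ^ (β - 1) = 1 := by
      rw [← Real.rpow_add hx0]; norm_num
    have he : 1 - β - 1 = -β := by ring
    rw [he, hfdef, hc]
    have hxx2 : x ^ (1 - β) * (Real.cos (x ^ β) * (β * x ^ (β - 1)))
        = Real.cos (x ^ β) * β := by
      rw [show x ^ (1 - β) * (Real.cos (x ^ β) * (β * x ^ (β - 1)))
          = (Real.cos (x ^ β) * β) * (x ^ (1 - β) * x ^ (β - 1)) by ring, hxx, mul_one]
    rw [hxx2]
    field_simp
    ring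
  -- continuity of f on positive reals
  have hcontf : ∀ t : ℝ, 1 ≤ t → ContinuousOn f (Set.Icc 1 t) := by
    intro t ht
    intro x hx
    have hx0 : (0:ℝ) < x := lt_of_lt_of_le one_pos hx.1
    have hco : ContinuousAt (fun y : ℝ => y ^ β) x :=
      Real.continuousAt_rpow_const x β (Or.inl hx0.ne')
    have hcn : ContinuousAt (fun y : ℝ => y ^ (-β)) x :=
      Real.continuousAt_rpow_const x (-β) (Or.inl hx0.ne')
    exact (((Real.continuous_cos.continuousAt.comp hco).add
      (continuousAt_const.mul (hcn.mul
        (Real.continuous_sin.continuousAt.comp hco))))).continuousWithinAt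
  -- key bound
  have hsin : ∀ y : ℝ, |Real.sin y| ≤ 1 := fun y =>
    abs_le.mpr ⟨Real.neg_one_le_sin y, Real.sin_le_one y⟩
  have key : ∀ t : ℝ, 1 ≤ t →
      |∫ x in Set.Icc (1:ℝ) t, Real.cos (x ^ β)| ≤ (3 / β) * t ^ (1 - β) := by
    intro t ht
    have huIcc : Set.uIcc (1:ℝ) t = Set.Icc 1 t := Set.uIcc_of_le ht
    have hIcceq : ∫ x in Set.Icc (1:ℝ) t, Real.cos (x ^ β)
        = ∫ x in (1:ℝ)..t, Real.cos (x ^ β) := by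
      rw [intervalIntegral.integral_of_le ht, MeasureTheory.integral_Icc_eq_integral_Ioc]
    -- continuity pieces on Icc
    have hcg : ContinuousOn (fun x : ℝ => Real.cos (x ^ β)) (Set.Icc 1 t) := by
      intro x hx
      have hx0 : (0:ℝ) < x := lt_of_lt_of_le one_pos hx.1
      exact (Real.continuous_cos.continuousAt.comp
        (Real.continuousAt_rpow_const x β (Or.inl hx0.ne'))).continuousWithinAt
    have hch : ContinuousOn (fun x : ℝ => x ^ (-β) * Real.sin (x ^ β)) (Set.Icc 1 t) := by
      intro x hx
      have hx0 : (0:ℝ) < x := lt_of_lt_of_le one_pos hx.1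
      exact ((Real.continuousAt_rpow_const x (-β) (Or.inl hx0.ne')).mul
        (Real.continuous_sin.continuousAt.comp
          (Real.continuousAt_rpow_const x β (Or.inl hx0.ne')))).continuousWithinAt
    have hig : IntervalIntegrable (fun x : ℝ => Real.cos (x ^ β)) volume 1 t :=
      (hcg.mono (by rw [huIcc])).intervalIntegrable
    have hih : IntervalIntegrable (fun x : ℝ => x ^ (-β) * Real.sin (x ^ β)) volume 1 t :=
      (hch.mono (by rw [huIcc])).intervalIntegrable
    have hif : IntervalIntegrable f volume 1 t :=
      ((hcontf t ht).mono (by rw [huIcc])).intervalIntegrable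
    have hFTC : ∫ x in (1:ℝ)..t, f x = F t - F 1 := by
      apply intervalIntegral.integral_eq_sub_of_hasDerivAt _ hif
      intro x hx
      rw [huIcc] at hx
      exact hder x (lt_of_lt_of_le one_pos hx.1)
    have hsplit : ∫ x in (1:ℝ)..t, f x
        = (∫ x in (1:ℝ)..t, Real.cos (x ^ β))
          + c * ∫ x in (1:ℝ)..t, x ^ (-β) * Real.sin (x ^ β) := by
      rw [hfdef]
      rw [intervalIntegral.integral_add hig (hih.const_mul c),
        intervalIntegral.integral_const_mul]
    have hg_eq : ∫ x in (1:ℝ)..t, Real.cos (x ^ β)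
        = F t - F 1 - c * ∫ x in (1:ℝ)..t, x ^ (-β) * Real.sin (x ^ β) := by
      rw [← hFTC, hsplit]; ring
    -- bounds
    have htpow1 : (1:ℝ) ≤ t ^ (1 - β) := Real.one_le_rpow ht (by linarith)
    have hFt : |F t| ≤ t ^ (1 - β) / β := by
      rw [hFdef]
      rw [abs_div, abs_of_pos hβ0, abs_mul,
        abs_of_nonneg (Real.rpow_nonneg (by linarith : (0:ℝ) ≤ t) _)]
      gcongr
      calc t ^ (1 - β) * |Real.sin (t ^ β)| ≤ t ^ (1 - β) * 1 := by
            apply mul_le_mul_of_nonneg_left (hsin _)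
              (Real.rpow_nonneg (by linarith) _)
        _ = t ^ (1 - β) := mul_one _
    have hF1 : |F 1| ≤ t ^ (1 - β) / β := by
      rw [hFdef]
      simp only [Real.one_rpow, one_mul]
      rw [abs_div, abs_of_pos hβ0]
      gcongr
      exact le_trans (hsin _) htpow1
    have hhint : |c * ∫ x in (1:ℝ)..t, x ^ (-β) * Real.sin (x ^ β)|
        ≤ t ^ (1 - β) / β := by
      rcases eq_or_lt_of_le hβ1 with hb1 | hb1
      · have : c = 0 := by rw [hc, hb1]; norm_num
        rw [this, zero_mul, abs_zero]
        positivity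
      · -- β < 1
        have habs : |∫ x in (1:ℝ)..t, x ^ (-β) * Real.sin (x ^ β)|
            ≤ ∫ x in (1:ℝ)..t, x ^ (-β) := by
          refine le_trans (intervalIntegral.abs_integral_le_integral_abs ht) ?_
          apply intervalIntegral.integral_mono_on ht (hih.abs) ?_
          · intro x hx
            have hx0 : (0:ℝ) < x := lt_of_lt_of_le one_pos hx.1
            rw [abs_mul, abs_of_nonneg (Real.rpow_nonneg hx0.le _)]
            calc x ^ (-β) * |Real.sin (x ^ β)| ≤ x ^ (-β) * 1 :=
                  mul_le_mul_of_nonneg_left (hsin _)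
                    (Real.rpow_nonneg hx0.le _)
              _ = x ^ (-β) := mul_one _
          · apply ContinuousOn.intervalIntegrable
            rw [huIcc]
            intro x hx
            have hx0 : (0:ℝ) < x := lt_of_lt_of_le one_pos hx.1
            exact (Real.continuousAt_rpow_const x (-β) (Or.inl hx0.ne')).continuousWithinAt
        have hrint : ∫ x in (1:ℝ)..t, x ^ (-β)
            = (t ^ (1 - β) - 1) / (1 - β) := by
          rw [integral_rpow (Or.inl (by linarith))]
          norm_num
          rw [show -β + 1 = 1 - β by ring]
        have hintnn : 0 ≤ ∫ x in (1:ℝ)..t, x ^ (-β) := by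
          rw [hrint]
          apply div_nonneg (by linarith) (by linarith)
        rw [abs_mul, abs_of_nonneg hc0]
        calc c * |∫ x in (1:ℝ)..t, x ^ (-β) * Real.sin (x ^ β)|
            ≤ c * ((t ^ (1 - β) - 1) / (1 - β)) := by
              rw [← hrint]
              exact mul_le_mul_of_nonneg_left habs hc0
          _ = (t ^ (1 - β) - 1) / β := by
              rw [hc]
              have h1b : (1:ℝ) - β ≠ 0 := by linarith
              field_simp
          _ ≤ t ^ (1 - β) / β := by
              gcongr
              linarith
    rw [hIcceq, hg_eq]
    have := abs_sub (F t - F 1) (c * ∫ x in (1:ℝ)..t, x ^ (-β) * Real.sin (x ^ β))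
    calc |F t - F 1 - c * ∫ x in (1:ℝ)..t, x ^ (-β) * Real.sin (x ^ β)|
        ≤ |F t - F 1| + |c * ∫ x in (1:ℝ)..t, x ^ (-β) * Real.sin (x ^ β)| :=
          abs_sub _ _
      _ ≤ (|F t| + |F 1|) + |c * ∫ x in (1:ℝ)..t, x ^ (-β) * Real.sin (x ^ β)| := by
          gcongr; exact abs_sub _ _
      _ ≤ (t ^ (1 - β) / β + t ^ (1 - β) / β) + t ^ (1 - β) / β := by
          gcongr
      _ = (3 / β) * t ^ (1 - β) := by ring
  -- conclude by squeezing
  apply squeeze_zero_norm' (a := fun t : ℝ => (3 / β) * t ^ (-β))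
  · filter_upwards [eventually_ge_atTop (1:ℝ)] with t ht
    have ht0 : (0:ℝ) < t := lt_of_lt_of_le one_pos ht
    have : ‖(1 / t) * ∫ x in Set.Icc (1:ℝ) t, Real.cos (x ^ β)‖
        = (1 / t) * |∫ x in Set.Icc (1:ℝ) t, Real.cos (x ^ β)| := by
      rw [Real.norm_eq_abs, abs_mul, abs_of_pos (by positivity : (0:ℝ) < 1 / t)]
    rw [this]
    calc (1 / t) * |∫ x in Set.Icc (1:ℝ) t, Real.cos (x ^ β)|
        ≤ (1 / t) * ((3 / β) * t ^ (1 - β)) := by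
          apply mul_le_mul_of_nonneg_left (key t ht) (by positivity)
      _ = (3 / β) * t ^ (-β) := by
          rw [show (-β) = (1 - β) + (-1) by ring, Real.rpow_add ht0,
            Real.rpow_neg_one]
          field_simp
  · have := (tendsto_rpow_neg_atTop hβ0).const_mul (3 / β)
    simpa using this

end
end
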